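/- Decomposition of the rescaled asymptotic mean square error: for α ∈ (0,1) with β = 1−α and p = α p₀ + β p₁, assuming U(α) ∈ (0,1] and the variances are finite, M(α) := (1/(αβ))(1/U(α) − 1) = Var₀(p₁/p)/(α U(α)²) + Var₁(p₀/p)/(β U(α)²). -/

import Mathlib

open MeasureTheory Real Set

/-- The mean `⟨g⟩_q = ∫_Ω g q` of `g` with respect to the density `q` on `Ω`. -/
noncomputable def wMean (Ω : Set ℝ) (q g : ℝ → ℝ) : ℝ :=
  ∫ w in Ω, g w * q w

/-- The variance `Var_q(g) = ⟨(g - ⟨g⟩_q)²⟩_q` of `g` with respect to the density `q`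
on `Ω`. -/
noncomputable def wVar (Ω : Set ℝ) (q g : ℝ → ℝ) : ℝ :=
  ∫ w in Ω, (g w - wMean Ω q g) ^ 2 * q w

/-- Decomposition of the rescaled asymptotic mean square error: for `α ∈ (0,1)` with
`β = 1 - α` and `p = α p₀ + β p₁`, assuming `U(α) ∈ (0,1]` and the variances are
finite, `M(α) = (1/(αβ))(1/U(α) - 1) = Var₀(p₁/p)/(α U(α)²) + Var₁(p₀/p)/(β U(α)²)`. -/
theorem mse_decomposition
    (p₀ p₁ : ℝ → ℝ) (Ω : Set ℝ)
    (hm0 : Measurable p₀) (hm1 : Measurable p₁)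
    (hpos0 : ∀ w, 0 ≤ p₀ w) (hpos1 : ∀ w, 0 ≤ p₁ w)
    (hnorm0 : ∫ w, p₀ w = 1) (hnorm1 : ∫ w, p₁ w = 1)
    (hΩ0 : Ω = {w | 0 < p₀ w}) (hΩ1 : Ω = {w | 0 < p₁ w})
    (α : ℝ) (hα : α ∈ Ioo (0:ℝ) 1)
    (U : ℝ)
    (hU : U = ∫ w in Ω, p₀ w * p₁ w / (α * p₀ w + (1 - α) * p₁ w))
    (hUpos : 0 < U) (hUle : U ≤ 1)
    (hUint : IntegrableOn (fun w => p₀ w * p₁ w / (α * p₀ w + (1 - α) * p₁ w)) Ω)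
    (hsq0 : IntegrableOn
      (fun w => (p₁ w / (α * p₀ w + (1 - α) * p₁ w)) ^ 2 * p₀ w) Ω)
    (hsq1 : IntegrableOn
      (fun w => (p₀ w / (α * p₀ w + (1 - α) * p₁ w)) ^ 2 * p₁ w) Ω) :
    (1 / (α * (1 - α))) * (1 / U - 1)
      = wVar Ω p₀ (fun w => p₁ w / (α * p₀ w + (1 - α) * p₁ w)) / (α * U ^ 2)
        + wVar Ω p₁ (fun w => p₀ w / (α * p₀ w + (1 - α) * p₁ w))
          / ((1 - α) * U ^ 2) := by
  obtain ⟨hα0, hα1⟩ := hα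
  have hβ0 : (0:ℝ) < 1 - α := by linarith
  set q : ℝ → ℝ := fun w => α * p₀ w + (1 - α) * p₁ w with hq
  have hΩmeas : MeasurableSet Ω := by
    rw [hΩ0]; exact measurableSet_lt measurable_const hm0
  have hqpos : ∀ w ∈ Ω, 0 < q w := by
    intro w hw
    have h0 : 0 < p₀ w := by rw [hΩ0] at hw; exact hw
    have h1 : 0 < p₁ w := by rw [hΩ1] at hw; exact hw
    have := mul_pos hα0 h0
    have := mul_pos hβ0 h1
    simp only [hq]; linarith
  have hzero0 : ∀ w ∉ Ω, p₀ w = 0 := by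
    intro w hw
    rw [hΩ0] at hw
    exact le_antisymm (not_lt.mp hw) (hpos0 w)
  have hzero1 : ∀ w ∉ Ω, p₁ w = 0 := by
    intro w hw
    rw [hΩ1] at hw
    exact le_antisymm (not_lt.mp hw) (hpos1 w)
  have hint0 : Integrable p₀ := by
    by_contra h
    rw [integral_undef h] at hnorm0
    exact one_ne_zero hnorm0.symm
  have hint1 : Integrable p₁ := by
    by_contra h
    rw [integral_undef h] at hnorm1
    exact one_ne_zero hnorm1.symm
  have hP0 : ∫ w in Ω, p₀ w = 1 := by
    rw [setIntegral_eq_integral_of_forall_compl_eq_zero hzero0]; exact hnorm0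
  have hP1 : ∫ w in Ω, p₁ w = 1 := by
    rw [setIntegral_eq_integral_of_forall_compl_eq_zero hzero1]; exact hnorm1
  -- means
  have he0 : (fun w => p₁ w / q w * p₀ w) = fun w => p₀ w * p₁ w / q w := by
    funext w; ring
  have he1 : (fun w => p₀ w / q w * p₁ w) = fun w => p₀ w * p₁ w / q w := by
    funext w; ring
  have hmean0 : wMean Ω p₀ (fun w => p₁ w / q w) = U := by
    rw [wMean, hU]; simp only [hq]; rw [show (fun w => p₁ w / (α * p₀ w + (1 - α) * p₁ w) * p₀ w) = fun w => p₀ w * p₁ w / (α * p₀ w + (1 - α) * p₁ w) from by funext w; ring]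
  have hmean1 : wMean Ω p₁ (fun w => p₀ w / q w) = U := by
    rw [wMean, hU]; simp only [hq]; rw [show (fun w => p₀ w / (α * p₀ w + (1 - α) * p₁ w) * p₁ w) = fun w => p₀ w * p₁ w / (α * p₀ w + (1 - α) * p₁ w) from by funext w; ring]
  set A : ℝ := ∫ w in Ω, (p₁ w / q w) ^ 2 * p₀ w with hA
  set B : ℝ := ∫ w in Ω, (p₀ w / q w) ^ 2 * p₁ w with hB
  have hsq0' : IntegrableOn (fun w => (p₁ w / q w) ^ 2 * p₀ w) Ω := hsq0
  have hsq1' : IntegrableOn (fun w => (p₀ w / q w) ^ 2 * p₁ w) Ω := hsq1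
  have hIm0 : IntegrableOn (fun w => p₁ w / q w * p₀ w) Ω := by
    rw [he0]; exact hUint
  have hIm1 : IntegrableOn (fun w => p₀ w / q w * p₁ w) Ω := by
    rw [he1]; exact hUint
  have hImean0 : ∫ w in Ω, p₁ w / q w * p₀ w = U := by
    rw [he0, hU]
  have hImean1 : ∫ w in Ω, p₀ w / q w * p₁ w = U := by
    rw [he1, hU]
  have hvar0 : wVar Ω p₀ (fun w => p₁ w / q w) = A - U ^ 2 := by
    rw [wVar, hmean0]
    have e : ∀ w, (p₁ w / q w - U) ^ 2 * p₀ w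
        = ((p₁ w / q w) ^ 2 * p₀ w - 2 * U * (p₁ w / q w * p₀ w)) + U ^ 2 * p₀ w := by
      intro w; ring
    simp_rw [e]
    have hf : IntegrableOn (fun w => (p₁ w / q w) ^ 2 * p₀ w
        - 2 * U * (p₁ w / q w * p₀ w)) Ω := hsq0'.sub (hIm0.const_mul _)
    have hg : IntegrableOn (fun w => U ^ 2 * p₀ w) Ω := (hint0.integrableOn).const_mul _
    rw [integral_add hf hg, integral_sub hsq0' (hIm0.const_mul _),
      integral_const_mul, integral_const_mul, hImean0, hP0, ← hA]
    ring
  have hvar1 : wVar Ω p₁ (fun w => p₀ w / q w) = B - U ^ 2 := by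
    rw [wVar, hmean1]
    have e : ∀ w, (p₀ w / q w - U) ^ 2 * p₁ w
        = ((p₀ w / q w) ^ 2 * p₁ w - 2 * U * (p₀ w / q w * p₁ w)) + U ^ 2 * p₁ w := by
      intro w; ring
    simp_rw [e]
    have hf : IntegrableOn (fun w => (p₀ w / q w) ^ 2 * p₁ w
        - 2 * U * (p₀ w / q w * p₁ w)) Ω := hsq1'.sub (hIm1.const_mul _)
    have hg : IntegrableOn (fun w => U ^ 2 * p₁ w) Ω := (hint1.integrableOn).const_mul _
    rw [integral_add hf hg, integral_sub hsq1' (hIm1.const_mul _),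
      integral_const_mul, integral_const_mul, hImean1, hP1, ← hB]
    ring
  have hkey : (1 - α) * A + α * B = U := by
    rw [hA, hB, ← integral_const_mul, ← integral_const_mul,
      ← integral_add ((hsq0'.const_mul _)) ((hsq1'.const_mul _)), hU]
    apply setIntegral_congr_fun hΩmeas
    intro w hw
    have hp : q w ≠ 0 := ne_of_gt (hqpos w hw)
    simp only [hq] at hp ⊢
    field_simp
    ring
  have hαne : α ≠ 0 := ne_of_gt hα0
  have hβne : (1:ℝ) - α ≠ 0 := ne_of_gt hβ0
  have hUne : U ≠ 0 := ne_of_gt hUpos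
  rw [hvar0, hvar1]
  field_simp
  linear_combination (-1 : ℝ) * hkey
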